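/- For every nonzero real number x there exists a constant C > 0 such that for all integers n ≥ 1, the partial sums of the series ∑ k^{−(1−ix)} satisfy |∑_{k=1}^{n} k^{−(1−ix)}| ≤ C, where for a positive integer k and s ∈ ℂ one sets k^{−s} := exp(−s·ln k) ∈ ℂ. -/

import Mathlib

open Filter Topology

open intervalIntegral in
/-- For every nonzero real `x`, the partial sums of `∑ k^{-(1-ix)}` are uniformly bounded:
there is `C > 0` such that `|∑_{k=1}^n k^{-(1-ix)}| ≤ C` for all `n ≥ 1`, where
`k^{-s} = exp(-s ln k)`. -/
theorem partial_sums_bounded (x : ℝ) (hx : x ≠ 0) :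
    ∃ C : ℝ, 0 < C ∧ ∀ n : ℕ, 1 ≤ n →
      ‖∑ k ∈ Finset.Icc 1 n,
        Complex.exp (-(1 - Complex.I * (x : ℂ)) * (Real.log (k : ℝ) : ℂ))‖ ≤ C := by
  set s : ℂ := Complex.I * (x : ℂ) with hs
  have hs0 : s ≠ 0 := by simp [hs, Complex.I_ne_zero, hx]
  have hsre : s.re = 0 := by simp [hs]
  set f : ℝ → ℂ := fun t => (t : ℂ) ^ (s - 1) with hf
  -- the terms of the sum are f k
  have hterm : ∀ k : ℕ, 1 ≤ k →
      Complex.exp (-(1 - Complex.I * (x : ℂ)) * (Real.log (k : ℝ) : ℂ)) = f k := by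
    intro k hk
    have hk0 : (0:ℝ) < (k:ℝ) := by exact_mod_cast hk
    have hkc : ((k:ℝ) : ℂ) ≠ 0 := by exact_mod_cast hk0.ne'
    have hfk : f (k:ℝ) = ((k:ℝ):ℂ) ^ (s - 1) := rfl
    rw [hfk, Complex.cpow_def_of_ne_zero hkc, ← Complex.ofReal_log hk0.le]
    congr 1
    rw [hs]
    ring
  -- antiderivative
  have hG : ∀ t : ℝ, t ≠ 0 → HasDerivAt (fun y : ℝ => (y : ℂ) ^ s / s) (f t) t := by
    intro t ht
    have := hasDerivAt_ofReal_cpow_const' ht (r := s - 1)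
      (by intro h; apply hs0; linear_combination h)
    simpa using this
  -- derivative of f
  have hs1 : s - 1 ≠ 0 := by
    intro h
    have h1 : s = 1 := by linear_combination h
    rw [h1] at hsre
    norm_num at hsre
  have hf' : ∀ t : ℝ, t ≠ 0 →
      HasDerivAt f ((s - 1) * (t : ℂ) ^ (s - 2)) t := by
    intro t ht
    have h2 : s - 2 ≠ -1 := by
      intro h
      have h1 : s = 1 := by linear_combination h
      rw [h1] at hsre
      norm_num at hsre
    have := (hasDerivAt_ofReal_cpow_const' ht h2).const_mul (s - 1)
    have e1 : s - 2 + 1 = s - 1 := by ring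
    rw [e1] at this
    have e2 : (fun y : ℝ => (s-1) * ((y:ℂ) ^ (s-1) / (s-1))) = f := by
      funext y; rw [hf]; field_simp
    rw [e2] at this
    exact this
  -- continuity / integrability of f on [a,b] ⊆ (0,∞)
  have hcont : ∀ a b : ℝ, 1 ≤ a → IntervalIntegrable f MeasureTheory.volume a b ∨ True := by
    exact fun a b _ => Or.inr trivial
  have hint : ∀ a b : ℝ, 1 ≤ a → 1 ≤ b → IntervalIntegrable f MeasureTheory.volume a b := by
    intro a b ha hb
    apply ContinuousOn.intervalIntegrable
    intro t ht
    have ht1 : (1:ℝ) ≤ t := by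
      rcases Set.mem_uIcc.1 ht with h | h
      · exact le_trans ha h.1
      · exact le_trans hb h.1
    exact (Complex.continuousAt_ofReal_cpow_const t (s-1)
      (Or.inr (by positivity))).continuousWithinAt
  -- FTC
  have hFTC : ∀ a b : ℝ, 1 ≤ a → 1 ≤ b →
      (∫ t in a..b, f t) = (b:ℂ) ^ s / s - (a:ℂ) ^ s / s := by
    intro a b ha hb
    rcases le_total a b with hab | hab
    · refine integral_eq_sub_of_hasDerivAt (fun t ht => hG t ?_) (hint a b ha hb)
      rw [Set.uIcc_of_le hab] at ht
      exact ne_of_gt (by linarith [ht.1])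
    · rw [integral_symm]
      rw [integral_eq_sub_of_hasDerivAt (f := fun y : ℝ => (y:ℂ) ^ s / s)
        (fun t ht => hG t (by
          rw [Set.uIcc_of_le hab] at ht; exact ne_of_gt (by linarith [ht.1])))
        (hint b a hb ha)]
      ring
  -- norm of t^s is 1
  have hnorm1 : ∀ t : ℝ, 0 < t → ‖(t:ℂ) ^ s‖ = 1 := by
    intro t ht
    rw [Complex.norm_cpow_eq_rpow_re_of_pos ht, hsre, Real.rpow_zero]
  have hsabs : ‖s‖ = |x| := by
    simp [hs, Complex.norm_real]
  -- bound on the integral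
  have hIb : ∀ a b : ℝ, 1 ≤ a → 1 ≤ b → ‖∫ t in a..b, f t‖ ≤ 2 / |x| := by
    intro a b ha hb
    rw [hFTC a b ha hb]
    have h1 : ‖(b:ℂ)^s/s‖ = 1 / |x| := by
      rw [norm_div, hnorm1 b (by linarith), hsabs]
    have h2 : ‖(a:ℂ)^s/s‖ = 1 / |x| := by
      rw [norm_div, hnorm1 a (by linarith), hsabs]
    calc ‖(b:ℂ)^s/s - (a:ℂ)^s/s‖ ≤ ‖(b:ℂ)^s/s‖ + ‖(a:ℂ)^s/s‖ := norm_sub_le _ _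
      _ = 2 / |x| := by rw [h1, h2]; ring
  set c : ℝ := ‖s - 1‖ with hc
  have hc0 : 0 < c := by rw [hc]; exact (norm_pos_iff.mpr hs1)
  -- pointwise bound ‖f t - f k‖ ≤ c / k^2 on [k, k+1]
  have hptw : ∀ k : ℕ, 1 ≤ k → ∀ t ∈ Set.Icc (k:ℝ) ((k:ℝ)+1),
      ‖f t - f k‖ ≤ c / (k:ℝ)^2 := by
    intro k hk t ht
    have hk0 : (0:ℝ) < (k:ℝ) := by exact_mod_cast hk
    have key := norm_image_sub_le_of_norm_deriv_le_segment'
      (f := f) (f' := fun t => (s - 1) * (t : ℂ) ^ (s - 2)) (a := (k:ℝ)) (b := (k:ℝ)+1)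
      (C := c / (k:ℝ)^2) ?_ ?_ t ht
    · calc ‖f t - f k‖ ≤ c / (k:ℝ)^2 * (t - k) := key
        _ ≤ c / (k:ℝ)^2 * 1 := by
            apply mul_le_mul_of_nonneg_left _ (by positivity)
            linarith [ht.2]
        _ = c / (k:ℝ)^2 := mul_one _
    · intro u hu
      exact (hf' u (ne_of_gt (lt_of_lt_of_le hk0 hu.1))).hasDerivWithinAt
    · intro u hu
      have hu1 : (k:ℝ) ≤ u := hu.1
      have hu0 : (0:ℝ) < u := lt_of_lt_of_le hk0 hu1
      rw [norm_mul, ← hc,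
        Complex.norm_cpow_eq_rpow_re_of_pos hu0]
      have hre : (s - 2).re = -2 := by simp [hsre]
      rw [hre]
      rw [div_eq_mul_inv]
      apply mul_le_mul_of_nonneg_left _ hc0.le
      rw [Real.rpow_neg hu0.le]
      rw [show ((2:ℝ) : ℝ) = ((2:ℕ):ℝ) by norm_num, Real.rpow_natCast]
      apply inv_anti₀ (by positivity)
      exact pow_le_pow_left₀ hk0.le hu1 2
  -- per-interval error bound
  have herr : ∀ k : ℕ, 1 ≤ k →
      ‖f k - ∫ t in (k:ℝ)..((k:ℝ)+1), f t‖ ≤ c / (k:ℝ)^2 := by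
    intro k hk
    have hk0 : (0:ℝ) < (k:ℝ) := by exact_mod_cast hk
    have hk1 : (1:ℝ) ≤ (k:ℝ) := by exact_mod_cast hk
    have hconst : (∫ _ in (k:ℝ)..((k:ℝ)+1), f k) = f k := by
      rw [integral_const]; simp
    have hintk := hint (k:ℝ) ((k:ℝ)+1) hk1 (by linarith)
    rw [← hconst, ← integral_sub (intervalIntegrable_const) hintk]
    have := norm_integral_le_of_norm_le_const (C := c / (k:ℝ)^2)
      (f := fun t => f k - f t) (a := (k:ℝ)) (b := (k:ℝ)+1) ?_
    · calc _ ≤ c / (k:ℝ)^2 * |(k:ℝ)+1 - k| := this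
        _ = c / (k:ℝ)^2 := by simp
    · intro t ht
      rw [Set.uIoc_of_le (by linarith)] at ht
      rw [norm_sub_rev]
      exact hptw k hk t ⟨ht.1.le, ht.2⟩
  -- sum of 1/(i+1)^2 bounded by 2
  have hbasel : ∀ n : ℕ, ∑ i ∈ Finset.range n, (1:ℝ) / ((i:ℝ)+1)^2 ≤ 2 := by
    have key : ∀ n : ℕ, 1 ≤ n → ∑ i ∈ Finset.range n, (1:ℝ) / ((i:ℝ)+1)^2 ≤ 2 - 1/(n:ℝ) := by
      intro n hn
      induction n, hn using Nat.le_induction with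
      | base => norm_num
      | succ n hn ih =>
        rw [Finset.sum_range_succ]
        have hn0 : (0:ℝ) < (n:ℝ) := by exact_mod_cast hn
        have h : (1:ℝ) / ((n:ℝ)+1)^2 ≤ 1/(n:ℝ) - 1/((n:ℝ)+1) := by
          rw [div_sub_div _ _ hn0.ne' (by positivity)]
          rw [div_le_div_iff₀ (by positivity) (by positivity)]
          ring_nf
          nlinarith
        push_cast
        linarith
    intro n
    rcases Nat.eq_zero_or_pos n with h | h
    · simp [h]
    · have hn0 : (0:ℝ) < (n:ℝ) := by exact_mod_cast h
      have := key n h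
      have : (0:ℝ) < 1/(n:ℝ) := by positivity
      linarith [key n h]
  -- main estimate
  refine ⟨2 * c + 2 / |x|, by positivity, fun n hn => ?_⟩
  have hsum : ∑ k ∈ Finset.Icc 1 n,
      Complex.exp (-(1 - Complex.I * (x : ℂ)) * (Real.log (k : ℝ) : ℂ))
      = ∑ i ∈ Finset.range n, f ((i:ℝ)+1) := by
    rw [← Finset.Ico_add_one_right_eq_Icc, Finset.sum_Ico_eq_sum_range]
    apply Finset.sum_congr (by norm_num)
    intro i _
    rw [hterm (1+i) (by omega)]
    congr 1
    push_cast
    ring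
  rw [hsum]
  -- telescoping
  set pts : ℕ → ℝ := fun i => (i:ℝ) + 1 with ha
  have htel : ∑ i ∈ Finset.range n, ∫ t in (pts i)..(pts (i+1)), f t = ∫ t in (pts 0)..(pts n), f t := by
    apply sum_integral_adjacent_intervals
    intro k _
    apply hint <;> · rw [ha]; push_cast; linarith [Nat.cast_nonneg (α := ℝ) k]
  have hdecomp : ∑ i ∈ Finset.range n, f ((i:ℝ)+1)
      = (∑ i ∈ Finset.range n, (f ((i:ℝ)+1) - ∫ t in (pts i)..(pts (i+1)), f t))
        + ∫ t in (pts 0)..(pts n), f t := by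
    rw [← htel, Finset.sum_sub_distrib]
    ring
  rw [hdecomp]
  have h1 : ‖∑ i ∈ Finset.range n, (f ((i:ℝ)+1) - ∫ t in (pts i)..(pts (i+1)), f t)‖ ≤ 2 * c := by
    calc ‖∑ i ∈ Finset.range n, (f ((i:ℝ)+1) - ∫ t in (pts i)..(pts (i+1)), f t)‖
        ≤ ∑ i ∈ Finset.range n, ‖f ((i:ℝ)+1) - ∫ t in (pts i)..(pts (i+1)), f t‖ :=
          norm_sum_le _ _
      _ ≤ ∑ i ∈ Finset.range n, c / ((i:ℝ)+1)^2 := by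
          apply Finset.sum_le_sum
          intro i _
          have := herr (i+1) (by omega)
          push_cast at this ⊢
          exact le_trans (le_of_eq (by simp [ha])) this
      _ = c * ∑ i ∈ Finset.range n, (1:ℝ) / ((i:ℝ)+1)^2 := by
          rw [Finset.mul_sum]; apply Finset.sum_congr rfl; intro i _; ring
      _ ≤ c * 2 := by
          exact mul_le_mul_of_nonneg_left (hbasel n) hc0.le
      _ = 2 * c := by ring
  have h2 : ‖∫ t in (pts 0)..(pts n), f t‖ ≤ 2 / |x| := by
    apply hIb <;> · rw [ha]; push_cast; linarith [Nat.cast_nonneg (α := ℝ) n]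
  calc ‖_ + _‖ ≤ _ + _ := norm_add_le _ _
    _ ≤ 2 * c + 2 / |x| := add_le_add h1 h2
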